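/- arXiv:1506.07707 — 11 statements merged into one kernel-verified Lean document; each statement's English description precedes it below -/
import Mathlib

section
/- Let 𝔸 and 𝔹 be categories with finite limits, V : 𝔸 → 𝔹 a faithful functor preserving finite limits, and p : V×V×V → V a V-Mal'tsev operation. Then 𝔸 is a weakly Mal'tsev category: for every diagram f : A → B, r : B → A, g : C → B, s : B → C in 𝔸 with f∘r = 1_B = g∘s, the induced morphisms e₁ = ⟨1_A, s∘f⟩ : A → A×_B C and e₂ = ⟨r∘g, 1_C⟩ : C → A×_B C into the pullback of f along g are jointly epimorphic, i.e. for any φ, φ' : A×_B C → D, if φ∘e₁ = φ'∘e₁ and φ∘e₂ = φ'∘e₂ then φ = φ'. -/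
open CategoryTheory CategoryTheory.Limits

/-- A `V`-Mal'tsev operation: a natural transformation `p : V×V×V → V` whose
components `p_A : V(A) × V(A) × V(A) ⟶ V(A)` satisfy
`p_A ∘ ⟨x,y,y⟩ = x = p_A ∘ ⟨y,y,x⟩`. -/
structure VMaltsevOperation {𝔸 𝔹 : Type*} [Category 𝔸] [Category 𝔹]
    [HasFiniteLimits 𝔹] (V : 𝔸 ⥤ 𝔹) where
  app : ∀ A : 𝔸, (V.obj A ⨯ V.obj A ⨯ V.obj A) ⟶ V.obj A
  naturality : ∀ {A A' : 𝔸} (f : A ⟶ A'),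
    prod.map (V.map f) (prod.map (V.map f) (V.map f)) ≫ app A' = app A ≫ V.map f
  maltsev_left : ∀ {T : 𝔹} {A : 𝔸} (x y : T ⟶ V.obj A),
    prod.lift x (prod.lift y y) ≫ app A = x
  maltsev_right : ∀ {T : 𝔹} {A : 𝔸} (x y : T ⟶ V.obj A),
    prod.lift y (prod.lift y x) ≫ app A = x

/-- If `𝔸` admits a `V`-Mal'tsev operation for a faithful finite-limit-preserving
functor `V`, then `𝔸` is weakly Mal'tsev: for any split pullback diagram the pair
`(e₁, e₂)` of induced morphisms into the pullback is jointly epimorphic. -/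
theorem weakly_maltsev_of_VMaltsevOperation
    {𝔸 𝔹 : Type*} [Category 𝔸] [Category 𝔹]
    [HasFiniteLimits 𝔸] [HasFiniteLimits 𝔹]
    (V : 𝔸 ⥤ 𝔹) [V.Faithful] [PreservesFiniteLimits V]
    (p : VMaltsevOperation V)
    {A B C D : 𝔸} (f : A ⟶ B) (r : B ⟶ A) (g : C ⟶ B) (s : B ⟶ C)
    (hr : r ≫ f = 𝟙 B) (hs : s ≫ g = 𝟙 B)
    (e₁ : A ⟶ pullback f g)
    (he₁₁ : e₁ ≫ pullback.fst f g = 𝟙 A) (he₁₂ : e₁ ≫ pullback.snd f g = f ≫ s)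
    (e₂ : C ⟶ pullback f g)
    (he₂₁ : e₂ ≫ pullback.fst f g = g ≫ r) (he₂₂ : e₂ ≫ pullback.snd f g = 𝟙 C)
    (φ φ' : pullback f g ⟶ D)
    (h₁ : e₁ ≫ φ = e₁ ≫ φ') (h₂ : e₂ ≫ φ = e₂ ≫ φ') :
    φ = φ' := by
  have hPf : ∀ {X : 𝔸} (u v : pullback f g ⟶ X), True := fun _ _ => trivial
  -- V.map fst and V.map snd are jointly monic, since V preserves the pullback
  have key : ∀ {T : 𝔹} (u v : T ⟶ V.obj (pullback f g)),
      u ≫ V.map (pullback.fst f g) = v ≫ V.map (pullback.fst f g) →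
      u ≫ V.map (pullback.snd f g) = v ≫ V.map (pullback.snd f g) → u = v := by
    intro T u v hu hv
    have heq : u ≫ (PreservesPullback.iso V f g).hom
        = v ≫ (PreservesPullback.iso V f g).hom := by
      apply pullback.hom_ext
      · simpa only [Category.assoc, PreservesPullback.iso_hom_fst] using hu
      · simpa only [Category.assoc, PreservesPullback.iso_hom_snd] using hv
    rwa [← cancel_mono (PreservesPullback.iso V f g).hom]
  -- the key factorization of the identity through the Mal'tsev operation
  have hL : prod.lift (V.map (pullback.fst f g ≫ e₁))
      (prod.lift (V.map (pullback.fst f g ≫ f ≫ s ≫ e₂))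
        (V.map (pullback.snd f g ≫ e₂))) ≫ p.app (pullback f g)
      = 𝟙 (V.obj (pullback f g)) := by
    apply key
    · rw [Category.assoc, ← p.naturality (pullback.fst f g), ← Category.assoc, prod.lift_map,
        prod.lift_map, ← V.map_comp, ← V.map_comp, ← V.map_comp, Category.id_comp]
      have c1 : (pullback.fst f g ≫ e₁) ≫ pullback.fst f g = pullback.fst f g := by
        rw [Category.assoc, he₁₁, Category.comp_id]
      have c2 : (pullback.fst f g ≫ f ≫ s ≫ e₂) ≫ pullback.fst f g
          = pullback.fst f g ≫ f ≫ r := by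
        simp only [Category.assoc, he₂₁, reassoc_of% hs]
      have c3 : (pullback.snd f g ≫ e₂) ≫ pullback.fst f g
          = pullback.fst f g ≫ f ≫ r := by
        rw [Category.assoc, he₂₁, ← Category.assoc, ← pullback.condition, Category.assoc]
      rw [c1, c2, c3, p.maltsev_left]
    · rw [Category.assoc, ← p.naturality (pullback.snd f g), ← Category.assoc, prod.lift_map,
        prod.lift_map, ← V.map_comp, ← V.map_comp, ← V.map_comp, Category.id_comp]
      have c1 : (pullback.fst f g ≫ e₁) ≫ pullback.snd f g
          = pullback.fst f g ≫ f ≫ s := by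
        rw [Category.assoc, he₁₂]
      have c2 : (pullback.fst f g ≫ f ≫ s ≫ e₂) ≫ pullback.snd f g
          = pullback.fst f g ≫ f ≫ s := by
        simp only [Category.assoc, he₂₂, Category.comp_id]
      have c3 : (pullback.snd f g ≫ e₂) ≫ pullback.snd f g = pullback.snd f g := by
        rw [Category.assoc, he₂₂, Category.comp_id]
      rw [c1, c2, c3, p.maltsev_right]
  apply V.map_injective
  have expand : ∀ ψ : pullback f g ⟶ D,
      V.map ψ = prod.lift (V.map ((pullback.fst f g ≫ e₁) ≫ ψ))
        (prod.lift (V.map ((pullback.fst f g ≫ f ≫ s ≫ e₂) ≫ ψ))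
          (V.map ((pullback.snd f g ≫ e₂) ≫ ψ))) ≫ p.app D := by
    intro ψ
    conv_lhs => rw [← Category.id_comp (V.map ψ), ← hL]
    rw [Category.assoc, ← p.naturality ψ, ← Category.assoc, prod.lift_map, prod.lift_map,
      ← V.map_comp, ← V.map_comp, ← V.map_comp]
  rw [expand φ, expand φ']
  congr 2
  · rw [Category.assoc, h₁, Category.assoc]
  · congr 1
    · simp only [Category.assoc, h₂]
    · rw [Category.assoc, h₂, Category.assoc]
end

section
/- Let 𝔸 and 𝔹 be categories with finite limits, V : 𝔸 → 𝔹 a faithful functor preserving finite limits, and p : V×V×V → V a V-Mal'tsev operation. Given a diagram in 𝔸 consisting of f : A → B, r : B → A, g : C → B, s : B → C with f∘r = 1_B = g∘s, and morphisms α : A → D, β : B → D, γ : C → D with α∘r = β = γ∘s, there exists at most one morphism φ : A×_B C → D (where A×_B C is the pullback of f along g) such that φ∘⟨1_A, s∘f⟩ = α and φ∘⟨r∘g, 1_C⟩ = γ. -/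
open CategoryTheory CategoryTheory.Limits

/-- Given a split pullback diagram and a compatible cospan `α, β, γ`, there is at most one
morphism `φ : A ×_B C ⟶ D` with `φ ∘ e₁ = α` and `φ ∘ e₂ = γ`. -/
theorem unique_morphism_from_pullback
    {𝔸 𝔹 : Type*} [Category 𝔸] [Category 𝔹]
    [HasFiniteLimits 𝔸] [HasFiniteLimits 𝔹]
    (V : 𝔸 ⥤ 𝔹) [V.Faithful] [PreservesFiniteLimits V]
    (p : VMaltsevOperation V)
    {A B C D : 𝔸} (f : A ⟶ B) (r : B ⟶ A) (g : C ⟶ B) (s : B ⟶ C)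
    (hr : r ≫ f = 𝟙 B) (hs : s ≫ g = 𝟙 B)
    (α : A ⟶ D) (β : B ⟶ D) (γ : C ⟶ D)
    (hα : r ≫ α = β) (hγ : s ≫ γ = β)
    (e₁ : A ⟶ pullback f g)
    (he₁₁ : e₁ ≫ pullback.fst f g = 𝟙 A) (he₁₂ : e₁ ≫ pullback.snd f g = f ≫ s)
    (e₂ : C ⟶ pullback f g)
    (he₂₁ : e₂ ≫ pullback.fst f g = g ≫ r) (he₂₂ : e₂ ≫ pullback.snd f g = 𝟙 C)
    (φ φ' : pullback f g ⟶ D)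
    (hφ₁ : e₁ ≫ φ = α) (hφ₂ : e₂ ≫ φ = γ)
    (hφ'₁ : e₁ ≫ φ' = α) (hφ'₂ : e₂ ≫ φ' = γ) :
    φ = φ' := by
  -- `V` preserves the pullback, so `V π₁, V π₂` are jointly monic.
  have hmono : ∀ {T : 𝔹} (u v : T ⟶ V.obj (pullback f g)),
      u ≫ V.map (pullback.fst f g) = v ≫ V.map (pullback.fst f g) →
      u ≫ V.map (pullback.snd f g) = v ≫ V.map (pullback.snd f g) → u = v := by
    intro T u v h1 h2
    rw [← cancel_mono (PreservesPullback.iso V f g).hom]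
    apply pullback.hom_ext
    · simpa [PreservesPullback.iso_hom_fst] using h1
    · simpa [PreservesPullback.iso_hom_snd] using h2
  -- Any `ψ` with the two equations has a determined image under `V`.
  have key : ∀ ψ : pullback f g ⟶ D, e₁ ≫ ψ = α → e₂ ≫ ψ = γ →
      V.map ψ =
      prod.lift (V.map (pullback.fst f g ≫ α))
        (prod.lift (V.map (pullback.fst f g ≫ f ≫ r ≫ α))
          (V.map (pullback.snd f g ≫ γ))) ≫ p.app D := by
    intro ψ h1 h2
    have ht : prod.lift (V.map (pullback.fst f g ≫ e₁))
        (prod.lift (V.map (pullback.fst f g ≫ f ≫ r ≫ e₁))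
          (V.map (pullback.snd f g ≫ e₂))) ≫
        p.app (pullback f g) = 𝟙 (V.obj (pullback f g)) := by
      apply hmono
      · rw [Category.assoc, ← p.naturality (pullback.fst f g)]
        have h1' : V.map (pullback.fst f g ≫ f ≫ r ≫ e₁) ≫ V.map (pullback.fst f g)
            = V.map (pullback.snd f g ≫ e₂) ≫ V.map (pullback.fst f g) := by
          rw [← V.map_comp, ← V.map_comp]
          congr 1
          simp [he₁₁, he₂₁, pullback.condition_assoc]
        have h2' : V.map (pullback.fst f g ≫ e₁) ≫ V.map (pullback.fst f g)
            = V.map (pullback.fst f g) := by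
          rw [← V.map_comp]; congr 1; simp [he₁₁]
        rw [← Category.assoc, prod.lift_map, prod.lift_map, h1', h2',
          p.maltsev_left, Category.id_comp]
      · rw [Category.assoc, ← p.naturality (pullback.snd f g)]
        have h1' : V.map (pullback.fst f g ≫ e₁) ≫ V.map (pullback.snd f g)
            = V.map (pullback.fst f g ≫ f ≫ r ≫ e₁) ≫ V.map (pullback.snd f g) := by
          rw [← V.map_comp, ← V.map_comp]
          congr 1
          simp [he₁₂, reassoc_of% hr]

        have h2' : V.map (pullback.snd f g ≫ e₂) ≫ V.map (pullback.snd f g)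
            = V.map (pullback.snd f g) := by
          rw [← V.map_comp]; congr 1; simp [he₂₂]
        rw [← Category.assoc, prod.lift_map, prod.lift_map, h1', h2',
          p.maltsev_right, Category.id_comp]
    calc V.map ψ = (prod.lift (V.map (pullback.fst f g ≫ e₁))
        (prod.lift (V.map (pullback.fst f g ≫ f ≫ r ≫ e₁))
          (V.map (pullback.snd f g ≫ e₂))) ≫
        p.app (pullback f g)) ≫ V.map ψ := by rw [ht, Category.id_comp]
      _ = _ := by
        rw [Category.assoc, ← p.naturality ψ, ← Category.assoc,
          prod.lift_map, prod.lift_map]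
        congr 2
        · rw [← V.map_comp]; congr 1; simp [h1]
        · congr 1
          · rw [← V.map_comp]; congr 1; simp [h1]
          · rw [← V.map_comp]; congr 1; simp [h2]
  apply V.map_injective
  rw [key φ hφ₁ hφ₂, key φ' hφ'₁ hφ'₂]
end

section
/- Let 𝔸 and 𝔹 be categories with finite limits, V : 𝔸 → 𝔹 a faithful functor preserving finite limits, and p : V×V×V → V a V-Mal'tsev operation. Given f : A → B, r : B → A, g : C → B, s : B → C with f∘r = 1_B = g∘s, morphisms α : A → D, β : B → D, γ : C → D with α∘r = β = γ∘s, and a morphism φ : A×_B C → D with φ∘⟨1_A, s∘f⟩ = α and φ∘⟨r∘g, 1_C⟩ = γ, then V(φ) = p_D ∘ ⟨V(α∘π₁), V(β∘f∘π₁), V(γ∘π₂)⟩, where π₁ : A×_B C → A and π₂ : A×_B C → C are the pullback projections (note V preserves the pullback, so this equation makes sense in 𝔹). -/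
open CategoryTheory CategoryTheory.Limits

/-- When a morphism `φ : A ×_B C ⟶ D` with `φ ∘ e₁ = α` and `φ ∘ e₂ = γ` exists,
its image under `V` is given by the Mal'tsev formula
`V(φ) = p_D ∘ ⟨V(α∘π₁), V(β∘f∘π₁), V(γ∘π₂)⟩`. -/
theorem V_map_of_morphism_from_pullback
    {𝔸 𝔹 : Type*} [Category 𝔸] [Category 𝔹]
    [HasFiniteLimits 𝔸] [HasFiniteLimits 𝔹]
    (V : 𝔸 ⥤ 𝔹) [V.Faithful] [PreservesFiniteLimits V]
    (p : VMaltsevOperation V)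
    {A B C D : 𝔸} (f : A ⟶ B) (r : B ⟶ A) (g : C ⟶ B) (s : B ⟶ C)
    (hr : r ≫ f = 𝟙 B) (hs : s ≫ g = 𝟙 B)
    (α : A ⟶ D) (β : B ⟶ D) (γ : C ⟶ D)
    (hα : r ≫ α = β) (hγ : s ≫ γ = β)
    (e₁ : A ⟶ pullback f g)
    (he₁₁ : e₁ ≫ pullback.fst f g = 𝟙 A) (he₁₂ : e₁ ≫ pullback.snd f g = f ≫ s)
    (e₂ : C ⟶ pullback f g)
    (he₂₁ : e₂ ≫ pullback.fst f g = g ≫ r) (he₂₂ : e₂ ≫ pullback.snd f g = 𝟙 C)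
    (φ : pullback f g ⟶ D)
    (hφ₁ : e₁ ≫ φ = α) (hφ₂ : e₂ ≫ φ = γ) :
    V.map φ =
      prod.lift (V.map (pullback.fst f g ≫ α))
        (prod.lift (V.map (pullback.fst f g ≫ f ≫ β)) (V.map (pullback.snd f g ≫ γ)))
        ≫ p.app D := by
  have hβ : β = r ≫ e₁ ≫ φ := by rw [hφ₁, hα]
  have key : prod.lift (V.map (pullback.fst f g ≫ e₁))
      (prod.lift (V.map (pullback.fst f g ≫ f ≫ r ≫ e₁)) (V.map (pullback.snd f g ≫ e₂)))
      ≫ p.app (pullback f g) = 𝟙 (V.obj (pullback f g)) := by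
    have h1 : (prod.lift (V.map (pullback.fst f g ≫ e₁))
        (prod.lift (V.map (pullback.fst f g ≫ f ≫ r ≫ e₁)) (V.map (pullback.snd f g ≫ e₂)))
        ≫ p.app (pullback f g)) ≫ V.map (pullback.fst f g)
        = 𝟙 (V.obj (pullback f g)) ≫ V.map (pullback.fst f g) := by
      rw [Category.assoc, ← p.naturality (pullback.fst f g), Category.id_comp]
      rw [← Category.assoc, prod.lift_map, prod.lift_map]
      rw [← V.map_comp, ← V.map_comp, ← V.map_comp]
      have c1 : (pullback.fst f g ≫ e₁) ≫ pullback.fst f g = pullback.fst f g := by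
        rw [Category.assoc, he₁₁, Category.comp_id]
      have c2 : (pullback.fst f g ≫ f ≫ r ≫ e₁) ≫ pullback.fst f g
          = pullback.fst f g ≫ f ≫ r := by
        simp only [Category.assoc, he₁₁, Category.comp_id]
      have c3 : (pullback.snd f g ≫ e₂) ≫ pullback.fst f g
          = pullback.fst f g ≫ f ≫ r := by
        rw [Category.assoc, he₂₁, ← Category.assoc, ← pullback.condition, Category.assoc]
      rw [c1, c2, c3, p.maltsev_left]
    have h2 : (prod.lift (V.map (pullback.fst f g ≫ e₁))
        (prod.lift (V.map (pullback.fst f g ≫ f ≫ r ≫ e₁)) (V.map (pullback.snd f g ≫ e₂)))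
        ≫ p.app (pullback f g)) ≫ V.map (pullback.snd f g)
        = 𝟙 (V.obj (pullback f g)) ≫ V.map (pullback.snd f g) := by
      rw [Category.assoc, ← p.naturality (pullback.snd f g), Category.id_comp]
      rw [← Category.assoc, prod.lift_map, prod.lift_map]
      rw [← V.map_comp, ← V.map_comp, ← V.map_comp]
      have c1 : (pullback.fst f g ≫ e₁) ≫ pullback.snd f g
          = pullback.fst f g ≫ f ≫ s := by
        rw [Category.assoc, he₁₂]
      have c2 : (pullback.fst f g ≫ f ≫ r ≫ e₁) ≫ pullback.snd f g
          = pullback.fst f g ≫ f ≫ s := by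
        simp only [Category.assoc, he₁₂]
        rw [← Category.assoc r f, hr, Category.id_comp]
      have c3 : (pullback.snd f g ≫ e₂) ≫ pullback.snd f g = pullback.snd f g := by
        rw [Category.assoc, he₂₂, Category.comp_id]
      rw [c1, c2, c3, p.maltsev_right]
    have hlim : IsLimit (PullbackCone.mk (V.map (pullback.fst f g))
        (V.map (pullback.snd f g))
        (by rw [← V.map_comp, ← V.map_comp, pullback.condition])) :=
      isLimitPullbackConeMapOfIsLimit V pullback.condition (pullbackIsPullback f g)
    exact PullbackCone.IsLimit.hom_ext hlim h1 h2
  symm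
  calc prod.lift (V.map (pullback.fst f g ≫ α))
        (prod.lift (V.map (pullback.fst f g ≫ f ≫ β)) (V.map (pullback.snd f g ≫ γ)))
        ≫ p.app D
      = prod.lift (V.map (pullback.fst f g ≫ e₁))
          (prod.lift (V.map (pullback.fst f g ≫ f ≫ r ≫ e₁)) (V.map (pullback.snd f g ≫ e₂)))
          ≫ prod.map (V.map φ) (prod.map (V.map φ) (V.map φ)) ≫ p.app D := by
        conv_rhs => rw [← Category.assoc, prod.lift_map, prod.lift_map,
          ← V.map_comp, ← V.map_comp, ← V.map_comp]
        congr 2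
        · rw [Category.assoc, hφ₁]
        · congr 1
          · simp only [Category.assoc, hβ]
          · rw [Category.assoc, hφ₂]
    _ = prod.lift (V.map (pullback.fst f g ≫ e₁))
          (prod.lift (V.map (pullback.fst f g ≫ f ≫ r ≫ e₁)) (V.map (pullback.snd f g ≫ e₂)))
          ≫ p.app (pullback f g) ≫ V.map φ := by rw [p.naturality]
    _ = V.map φ := by rw [← Category.assoc, key, Category.id_comp]
end

section
/- Let 𝔸 and 𝔹 be categories with finite limits, V : 𝔸 → 𝔹 a faithful functor preserving finite limits, and p : V×V×V → V a V-Mal'tsev operation. Let A be an object of 𝔸 with endomorphisms s, t : A → A satisfying s∘t = t and t∘s = s, for which property (P1) holds. Then for every object X of 𝔸 and morphisms x₁,x₂,x₃,y₁,y₂,y₃,z₁,z₂,z₃ : X → A satisfying s∘x₁ = s∘x₂ = s∘y₂ = s∘y₁, t∘x₂ = t∘x₃, t∘y₁ = t∘z₁, s∘x₃ = s∘y₃, s∘z₁ = s∘z₂, and t∘y₃ = t∘z₃ = t∘y₂ = t∘z₂, the associativity equation holds: p_A⟨p_A⟨Vx₁,Vx₂,Vx₃⟩, p_A⟨Vy₁,Vy₂,Vy₃⟩,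 p_A⟨Vz₁,Vz₂,Vz₃⟩⟩ = p_A⟨p_A⟨Vx₁,Vy₁,Vz₁⟩, p_A⟨Vx₂,Vy₂,Vz₂⟩, p_A⟨Vx₃,Vy₃,Vz₃⟩⟩. -/
open CategoryTheory CategoryTheory.Limits

/-- The Mal'tsev operation applied to three generalized elements `x, y, z : T ⟶ V(A)`:
`p_A ∘ ⟨x, y, z⟩`. -/
noncomputable def VMaltsevOperation.papp {𝔸 𝔹 : Type*} [Category 𝔸] [Category 𝔹]
    [HasFiniteLimits 𝔹] {V : 𝔸 ⥤ 𝔹} (p : VMaltsevOperation V)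
    {T : 𝔹} {A : 𝔸} (x y z : T ⟶ V.obj A) : T ⟶ V.obj A :=
  prod.lift x (prod.lift y z) ≫ p.app A

/-- Property (P1) for a triple `(A, s, t)`: for all `α, β, γ : X ⟶ A` with
`s∘α = s∘β` and `t∘β = t∘γ` there is a unique `φ : X ⟶ A` with
`V(φ) = p_A ∘ ⟨V(α), V(β), V(γ)⟩`. -/
def PropertyP1 {𝔸 𝔹 : Type*} [Category 𝔸] [Category 𝔹]
    [HasFiniteLimits 𝔹] {V : 𝔸 ⥤ 𝔹} (p : VMaltsevOperation V)
    {A : 𝔸} (s t : A ⟶ A) : Prop :=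
  ∀ (X : 𝔸) (α β γ : X ⟶ A), α ≫ s = β ≫ s → β ≫ t = γ ≫ t →
    ∃! φ : X ⟶ A, V.map φ = p.papp (V.map α) (V.map β) (V.map γ)

lemma VMaltsevOperation.comp_papp {𝔸 𝔹 : Type*} [Category 𝔸] [Category 𝔹]
    [HasFiniteLimits 𝔹] {V : 𝔸 ⥤ 𝔹} (p : VMaltsevOperation V)
    {T T' : 𝔹} {A : 𝔸} (g : T' ⟶ T) (x y z : T ⟶ V.obj A) :
    g ≫ p.papp x y z = p.papp (g ≫ x) (g ≫ y) (g ≫ z) := by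
  rw [VMaltsevOperation.papp, VMaltsevOperation.papp, ← Category.assoc,
    prod.comp_lift, prod.comp_lift]

lemma VMaltsevOperation.papp_map {𝔸 𝔹 : Type*} [Category 𝔸] [Category 𝔹]
    [HasFiniteLimits 𝔹] {V : 𝔸 ⥤ 𝔹} (p : VMaltsevOperation V)
    {T : 𝔹} {A A' : 𝔸} (f : A ⟶ A') (x y z : T ⟶ V.obj A) :
    p.papp x y z ≫ V.map f =
      p.papp (x ≫ V.map f) (y ≫ V.map f) (z ≫ V.map f) := by
  rw [VMaltsevOperation.papp, Category.assoc, ← p.naturality f,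
    VMaltsevOperation.papp, ← Category.assoc]
  congr 1
  rw [prod.lift_map, prod.lift_map]

/-- Associativity of the `V`-Mal'tsev operation on a triple `(A, s, t)` satisfying (P1). -/
theorem maltsev_assoc
    {𝔸 𝔹 : Type*} [Category 𝔸] [Category 𝔹]
    [HasFiniteLimits 𝔸] [HasFiniteLimits 𝔹]
    (V : 𝔸 ⥤ 𝔹) [V.Faithful] [PreservesFiniteLimits V]
    (p : VMaltsevOperation V)
    {A : 𝔸} (s t : A ⟶ A) (hst : t ≫ s = t) (hts : s ≫ t = s)
    (hP1 : PropertyP1 p s t)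
    {X : 𝔸} (x₁ x₂ x₃ y₁ y₂ y₃ z₁ z₂ z₃ : X ⟶ A)
    (h1 : x₁ ≫ s = x₂ ≫ s) (h1' : x₂ ≫ s = y₂ ≫ s) (h1'' : y₂ ≫ s = y₁ ≫ s)
    (h2 : x₂ ≫ t = x₃ ≫ t)
    (h3 : y₁ ≫ t = z₁ ≫ t)
    (h4 : x₃ ≫ s = y₃ ≫ s)
    (h5 : z₁ ≫ s = z₂ ≫ s)
    (h6 : y₃ ≫ t = z₃ ≫ t) (h6' : z₃ ≫ t = y₂ ≫ t) (h6'' : y₂ ≫ t = z₂ ≫ t) :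
    p.papp (p.papp (V.map x₁) (V.map x₂) (V.map x₃))
        (p.papp (V.map y₁) (V.map y₂) (V.map y₃))
        (p.papp (V.map z₁) (V.map z₂) (V.map z₃)) =
      p.papp (p.papp (V.map x₁) (V.map y₁) (V.map z₁))
        (p.papp (V.map x₂) (V.map y₂) (V.map z₂))
        (p.papp (V.map x₃) (V.map y₃) (V.map z₃)) := by
  -- object of compatible triples
  let Q : 𝔸 := pullback s s
  let P : 𝔸 := pullback (pullback.snd s s ≫ t) t
  let π₁ : P ⟶ A := pullback.fst _ _ ≫ pullback.fst s s
  let π₂ : P ⟶ A := pullback.fst _ _ ≫ pullback.snd s s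
  let π₃ : P ⟶ A := pullback.snd _ _
  have hπs : π₁ ≫ s = π₂ ≫ s := by
    simp only [π₁, π₂, Category.assoc, pullback.condition]
  have hπt : π₂ ≫ t = π₃ ≫ t := by
    simp only [π₂, π₃, Category.assoc, pullback.condition]
  obtain ⟨q, hq, -⟩ := hP1 P π₁ π₂ π₃ hπs hπt
  -- the three row lifts
  have hy1 : y₁ ≫ s = y₂ ≫ s := h1''.symm
  have hy2 : y₂ ≫ t = y₃ ≫ t := (h6.trans h6').symm
  have hz2 : z₂ ≫ t = z₃ ≫ t := h6''.symm.trans h6'.symm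
  let lx : X ⟶ P := pullback.lift (pullback.lift x₁ x₂ h1) x₃
    (by rw [← Category.assoc, pullback.lift_snd]; exact h2)
  let ly : X ⟶ P := pullback.lift (pullback.lift y₁ y₂ hy1) y₃
    (by rw [← Category.assoc, pullback.lift_snd]; exact hy2)
  let lz : X ⟶ P := pullback.lift (pullback.lift z₁ z₂ h5) z₃
    (by rw [← Category.assoc, pullback.lift_snd]; exact hz2)
  have hlx₁ : lx ≫ π₁ = x₁ := by simp only [lx, π₁, pullback.lift_fst_assoc, pullback.lift_fst, pullback.lift_snd]
  have hlx₂ : lx ≫ π₂ = x₂ := by simp only [lx, π₂, pullback.lift_fst_assoc, pullback.lift_fst, pullback.lift_snd]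
  have hlx₃ : lx ≫ π₃ = x₃ := by simp only [lx, π₃, pullback.lift_fst_assoc, pullback.lift_fst, pullback.lift_snd]
  have hly₁ : ly ≫ π₁ = y₁ := by simp only [ly, π₁, pullback.lift_fst_assoc, pullback.lift_fst, pullback.lift_snd]
  have hly₂ : ly ≫ π₂ = y₂ := by simp only [ly, π₂, pullback.lift_fst_assoc, pullback.lift_fst, pullback.lift_snd]
  have hly₃ : ly ≫ π₃ = y₃ := by simp only [ly, π₃, pullback.lift_fst_assoc, pullback.lift_fst, pullback.lift_snd]
  have hlz₁ : lz ≫ π₁ = z₁ := by simp only [lz, π₁, pullback.lift_fst_assoc, pullback.lift_fst, pullback.lift_snd]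
  have hlz₂ : lz ≫ π₂ = z₂ := by simp only [lz, π₂, pullback.lift_fst_assoc, pullback.lift_fst, pullback.lift_snd]
  have hlz₃ : lz ≫ π₃ = z₃ := by simp only [lz, π₃, pullback.lift_fst_assoc, pullback.lift_fst, pullback.lift_snd]
  -- rows as composites with q
  have row : ∀ (l : X ⟶ P) (a b c : X ⟶ A), l ≫ π₁ = a → l ≫ π₂ = b → l ≫ π₃ = c →
      V.map l ≫ V.map q = p.papp (V.map a) (V.map b) (V.map c) := by
    intro l a b c ha hb hc
    rw [hq, p.comp_papp, ← V.map_comp, ← V.map_comp, ← V.map_comp, ha, hb, hc]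
  have hx := row lx x₁ x₂ x₃ hlx₁ hlx₂ hlx₃
  have hy := row ly y₁ y₂ y₃ hly₁ hly₂ hly₃
  have hz := row lz z₁ z₂ z₃ hlz₁ hlz₂ hlz₃
  rw [← hx, ← hy, ← hz, ← p.papp_map q, hq, p.comp_papp,
    p.papp_map π₁, p.papp_map π₂, p.papp_map π₃,
    ← V.map_comp, ← V.map_comp, ← V.map_comp,
    ← V.map_comp, ← V.map_comp, ← V.map_comp,
    ← V.map_comp, ← V.map_comp, ← V.map_comp,
    hlx₁, hlx₂, hlx₃, hly₁, hly₂, hly₃, hlz₁, hlz₂, hlz₃]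
end

section
/- Let 𝔸 and 𝔹 be categories with finite limits, V : 𝔸 → 𝔹 a faithful functor preserving finite limits, and p : V×V×V → V a V-Mal'tsev operation. Let A be an object of 𝔸 with endomorphisms s, t : A → A satisfying s∘t = t and t∘s = s, for which property (P1) holds. Then for every object X of 𝔸 and morphisms x₁, x₂, y₂, z₃ : X → A with s∘x₁ = s∘x₂ = s∘y₂ and t∘y₂ = t∘z₃, one has p_A⟨Vx₁, Vx₂, p_A⟨Vx₂, Vy₂, Vz₃⟩⟩ = p_A⟨Vx₁, Vy₂, Vz₃⟩. -/
open CategoryTheory CategoryTheory.Limits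

/-- Left absorption identity `p⟨x₁, x₂, p⟨x₂, y₂, z₃⟩⟩ = p⟨x₁, y₂, z₃⟩` for a
triple `(A, s, t)` satisfying (P1). -/
theorem maltsev_assoc_left
    {𝔸 𝔹 : Type*} [Category 𝔸] [Category 𝔹]
    [HasFiniteLimits 𝔸] [HasFiniteLimits 𝔹]
    (V : 𝔸 ⥤ 𝔹) [V.Faithful] [PreservesFiniteLimits V]
    (p : VMaltsevOperation V)
    {A : 𝔸} (s t : A ⟶ A) (hst : t ≫ s = t) (hts : s ≫ t = s)
    (hP1 : PropertyP1 p s t)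
    {X : 𝔸} (x₁ x₂ y₂ z₃ : X ⟶ A)
    (h1 : x₁ ≫ s = x₂ ≫ s) (h2 : x₂ ≫ s = y₂ ≫ s) (h3 : y₂ ≫ t = z₃ ≫ t) :
    p.papp (V.map x₁) (V.map x₂) (p.papp (V.map x₂) (V.map y₂) (V.map z₃)) =
      p.papp (V.map x₁) (V.map y₂) (V.map z₃) := by
  set f : pullback s s ⟶ A := pullback.snd s s ≫ t with hf
  set P : 𝔸 := pullback f t with hP
  set π₁ : P ⟶ A := pullback.fst f t ≫ pullback.fst s s with hπ₁
  set π₂ : P ⟶ A := pullback.fst f t ≫ pullback.snd s s with hπ₂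
  set π₃ : P ⟶ A := pullback.snd f t with hπ₃
  have hπs : π₁ ≫ s = π₂ ≫ s := by
    rw [hπ₁, hπ₂, Category.assoc, Category.assoc, pullback.condition]
  have hπt : π₂ ≫ t = π₃ ≫ t := by
    rw [hπ₂, hπ₃, Category.assoc, ← hf, pullback.condition]
  obtain ⟨q, hq, -⟩ := hP1 P π₁ π₂ π₃ hπs hπt
  -- composing a map into P with q
  have hcomp : ∀ {Y : 𝔸} (w : Y ⟶ P),
      V.map w ≫ V.map q =
        p.papp (V.map (w ≫ π₁)) (V.map (w ≫ π₂)) (V.map (w ≫ π₃)) := by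
    intro Y w
    rw [hq]
    simp [VMaltsevOperation.papp, V.map_comp, prod.comp_lift_assoc, prod.comp_lift]
  -- building maps into P
  have key : ∀ (a b c : X ⟶ A), a ≫ s = b ≫ s → b ≫ t = c ≫ t →
      ∃ w : X ⟶ P, w ≫ π₁ = a ∧ w ≫ π₂ = b ∧ w ≫ π₃ = c := by
    intro a b c hab hbc
    refine ⟨pullback.lift (pullback.lift a b hab) c (by rw [hf, pullback.lift_snd_assoc, hbc]), ?_, ?_, ?_⟩
    · rw [hπ₁, pullback.lift_fst_assoc, pullback.lift_fst]
    · rw [hπ₂, pullback.lift_fst_assoc, pullback.lift_snd]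
    · rw [hπ₃, pullback.lift_snd]
  obtain ⟨w₁, e11, e12, e13⟩ := key x₁ x₂ x₂ h1 rfl
  obtain ⟨w₂, e21, e22, e23⟩ := key x₂ x₂ x₂ rfl rfl
  obtain ⟨w₃, e31, e32, e33⟩ := key x₂ y₂ z₃ h2 h3
  obtain ⟨w', e41, e42, e43⟩ := key x₁ y₂ z₃ (h1.trans h2) h3
  -- values of q on these maps
  have hv1 : V.map w₁ ≫ V.map q = V.map x₁ := by
    rw [hcomp, e11, e12, e13]; exact p.maltsev_left _ _
  have hv2 : V.map w₂ ≫ V.map q = V.map x₂ := by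
    rw [hcomp, e21, e22, e23]; exact p.maltsev_left _ _
  have hv3 : V.map w₃ ≫ V.map q = p.papp (V.map x₂) (V.map y₂) (V.map z₃) := by
    rw [hcomp, e31, e32, e33]
  have hv4 : V.map w' ≫ V.map q = p.papp (V.map x₁) (V.map y₂) (V.map z₃) := by
    rw [hcomp, e41, e42, e43]
  -- naturality of p at q
  have hnat : ∀ (a b c : V.obj X ⟶ V.obj P),
      p.papp (a ≫ V.map q) (b ≫ V.map q) (c ≫ V.map q) =
        (prod.lift a (prod.lift b c) ≫ p.app P) ≫ V.map q := by
    intro a b c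
    rw [Category.assoc, ← p.naturality q]
    simp [VMaltsevOperation.papp]
  -- naturality of p at the projections, applied to the w's
  have hproj : ∀ (g : P ⟶ A),
      (prod.lift (V.map w₁) (prod.lift (V.map w₂) (V.map w₃)) ≫ p.app P) ≫ V.map g =
        p.papp (V.map (w₁ ≫ g)) (V.map (w₂ ≫ g)) (V.map (w₃ ≫ g)) := by
    intro g
    rw [Category.assoc, ← p.naturality g]
    simp [VMaltsevOperation.papp, V.map_comp]
  -- joint monicity of V(π₁), V(π₂), V(π₃)
  have hext : ∀ (u v : V.obj X ⟶ V.obj P),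
      u ≫ V.map π₁ = v ≫ V.map π₁ → u ≫ V.map π₂ = v ≫ V.map π₂ →
      u ≫ V.map π₃ = v ≫ V.map π₃ → u = v := by
    intro u v e1 e2 e3
    have hfst : u ≫ V.map (pullback.fst f t) = v ≫ V.map (pullback.fst f t) := by
      rw [← cancel_mono (PreservesPullback.iso V s s).hom]
      apply pullback.hom_ext
      · have := e1
        rw [hπ₁, V.map_comp, ← Category.assoc, ← Category.assoc] at this
        simpa [PreservesPullback.iso_hom_fst] using this
      · have := e2
        rw [hπ₂, V.map_comp, ← Category.assoc, ← Category.assoc] at this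
        simpa [PreservesPullback.iso_hom_snd] using this
    rw [← cancel_mono (PreservesPullback.iso V f t).hom]
    apply pullback.hom_ext
    · simpa [PreservesPullback.iso_hom_fst] using hfst
    · have := e3
      rw [hπ₃] at this
      simpa [PreservesPullback.iso_hom_snd] using this
  -- the middle term equals V(w')
  have hmid : prod.lift (V.map w₁) (prod.lift (V.map w₂) (V.map w₃)) ≫ p.app P
      = V.map w' := by
    apply hext
    · rw [← V.map_comp, hproj, e11, e21, e31, e41]
      exact p.maltsev_left _ _
    · rw [← V.map_comp, hproj, e12, e22, e32, e42]
      exact p.maltsev_right _ _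
    · rw [← V.map_comp, hproj, e13, e23, e33, e43]
      exact p.maltsev_right _ _
  calc p.papp (V.map x₁) (V.map x₂) (p.papp (V.map x₂) (V.map y₂) (V.map z₃))
      = p.papp (V.map w₁ ≫ V.map q) (V.map w₂ ≫ V.map q) (V.map w₃ ≫ V.map q) := by
        rw [hv1, hv2, hv3]
    _ = (prod.lift (V.map w₁) (prod.lift (V.map w₂) (V.map w₃)) ≫ p.app P) ≫ V.map q :=
        hnat _ _ _
    _ = V.map w' ≫ V.map q := by rw [hmid]
    _ = p.papp (V.map x₁) (V.map y₂) (V.map z₃) := hv4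
end

section
/- Let 𝔸 and 𝔹 be categories with finite limits, V : 𝔸 → 𝔹 a faithful functor preserving finite limits, and p : V×V×V → V a V-Mal'tsev operation. Let A be an object of 𝔸 with endomorphisms s, t : A → A satisfying s∘t = t and t∘s = s, for which property (P1) holds. Then for every object X of 𝔸 and morphisms x₁, y₂, z₂, z₃ : X → A with s∘x₁ = s∘y₂ and t∘y₂ = t∘z₂ = t∘z₃, one has p_A⟨p_A⟨Vx₁, Vy₂, Vz₂⟩, Vz₂, Vz₃⟩ = p_A⟨Vx₁, Vy₂, Vz₃⟩. -/
open CategoryTheory CategoryTheory.Limits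

section Aux

variable {𝔸 𝔹 : Type*} [Category 𝔸] [Category 𝔹] [HasFiniteLimits 𝔹]
    {V : 𝔸 ⥤ 𝔹} (p : VMaltsevOperation V)

theorem VMaltsevOperation.papp_map_s5 {T : 𝔹} {A A' : 𝔸} (f : A ⟶ A')
    (u v w : T ⟶ V.obj A) :
    p.papp u v w ≫ V.map f = p.papp (u ≫ V.map f) (v ≫ V.map f) (w ≫ V.map f) := by
  simp only [VMaltsevOperation.papp, Category.assoc, ← p.naturality f]
  rw [← Category.assoc, prod.lift_map, prod.lift_map]

theorem VMaltsevOperation.comp_papp_s5 {T T' : 𝔹} {A : 𝔸} (u : T' ⟶ T)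
    (a b c : T ⟶ V.obj A) :
    u ≫ p.papp a b c = p.papp (u ≫ a) (u ≫ b) (u ≫ c) := by
  simp only [VMaltsevOperation.papp, ← Category.assoc]
  congr 1
  ext <;> simp

theorem VMaltsevOperation.papp_right {T : 𝔹} {A : 𝔸} (x y : T ⟶ V.obj A) :
    p.papp x y y = x := p.maltsev_left x y

theorem VMaltsevOperation.papp_left {T : 𝔹} {A : 𝔸} (x y : T ⟶ V.obj A) :
    p.papp y y x = x := p.maltsev_right x y

end Aux

/-- Right absorption identity `p⟨p⟨x₁, y₂, z₂⟩, z₂, z₃⟩ = p⟨x₁, y₂, z₃⟩` for a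
triple `(A, s, t)` satisfying (P1). -/
theorem maltsev_assoc_right
    {𝔸 𝔹 : Type*} [Category 𝔸] [Category 𝔹]
    [HasFiniteLimits 𝔸] [HasFiniteLimits 𝔹]
    (V : 𝔸 ⥤ 𝔹) [V.Faithful] [PreservesFiniteLimits V]
    (p : VMaltsevOperation V)
    {A : 𝔸} (s t : A ⟶ A) (hst : t ≫ s = t) (hts : s ≫ t = s)
    (hP1 : PropertyP1 p s t)
    {X : 𝔸} (x₁ y₂ z₂ z₃ : X ⟶ A)
    (h1 : x₁ ≫ s = y₂ ≫ s) (h2 : y₂ ≫ t = z₂ ≫ t) (h3 : z₂ ≫ t = z₃ ≫ t) :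
    p.papp (p.papp (V.map x₁) (V.map y₂) (V.map z₂)) (V.map z₂) (V.map z₃) =
      p.papp (V.map x₁) (V.map y₂) (V.map z₃) := by
  -- Build the object R = {(a,b,c) | s a = s b, t b = t c} as an iterated pullback.
  let R : 𝔸 := pullback (pullback.snd s s) (pullback.fst t t)
  let π₁ : R ⟶ A := pullback.fst _ _ ≫ pullback.fst s s
  let π₂ : R ⟶ A := pullback.fst _ _ ≫ pullback.snd s s
  let π₃ : R ⟶ A := pullback.snd _ _ ≫ pullback.snd t t
  have hπs : π₁ ≫ s = π₂ ≫ s := by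
    show (pullback.fst _ _ ≫ pullback.fst s s) ≫ s = (pullback.fst _ _ ≫ pullback.snd s s) ≫ s
    rw [Category.assoc, Category.assoc, pullback.condition]
  have hπt : π₂ ≫ t = π₃ ≫ t := by
    show (pullback.fst _ _ ≫ pullback.snd s s) ≫ t = (pullback.snd _ _ ≫ pullback.snd t t) ≫ t
    rw [Category.assoc, Category.assoc, ← pullback.condition (f := t) (g := t),
      ← Category.assoc, pullback.condition (f := pullback.snd s s), Category.assoc]
  obtain ⟨q, hq, -⟩ := hP1 R π₁ π₂ π₃ hπs hπt
  -- The three rows of the interchange matrix, as 𝔸-morphisms X ⟶ R.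
  let ρ₁ : X ⟶ R := pullback.lift (pullback.lift x₁ y₂ h1) (pullback.lift y₂ z₂ h2) (by rw [pullback.lift_snd, pullback.lift_fst])
  let ρ₂ : X ⟶ R := pullback.lift (pullback.lift z₂ z₂ rfl) (pullback.lift z₂ z₂ rfl) (by rw [pullback.lift_snd, pullback.lift_fst])
  let ρ₃ : X ⟶ R := pullback.lift (pullback.lift z₂ z₂ rfl) (pullback.lift z₂ z₃ h3) (by rw [pullback.lift_snd, pullback.lift_fst])
  have hρ₁₁ : ρ₁ ≫ π₁ = x₁ := by simp only [ρ₁, π₁]; rw [pullback.lift_fst_assoc, pullback.lift_fst]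
  have hρ₁₂ : ρ₁ ≫ π₂ = y₂ := by simp only [ρ₁, π₂]; rw [pullback.lift_fst_assoc, pullback.lift_snd]
  have hρ₁₃ : ρ₁ ≫ π₃ = z₂ := by simp only [ρ₁, π₃]; rw [pullback.lift_snd_assoc, pullback.lift_snd]
  have hρ₂₁ : ρ₂ ≫ π₁ = z₂ := by simp only [ρ₂, π₁]; rw [pullback.lift_fst_assoc, pullback.lift_fst]
  have hρ₂₂ : ρ₂ ≫ π₂ = z₂ := by simp only [ρ₂, π₂]; rw [pullback.lift_fst_assoc, pullback.lift_snd]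
  have hρ₂₃ : ρ₂ ≫ π₃ = z₂ := by simp only [ρ₂, π₃]; rw [pullback.lift_snd_assoc, pullback.lift_snd]
  have hρ₃₁ : ρ₃ ≫ π₁ = z₂ := by simp only [ρ₃, π₁]; rw [pullback.lift_fst_assoc, pullback.lift_fst]
  have hρ₃₂ : ρ₃ ≫ π₂ = z₂ := by simp only [ρ₃, π₂]; rw [pullback.lift_fst_assoc, pullback.lift_snd]
  have hρ₃₃ : ρ₃ ≫ π₃ = z₃ := by simp only [ρ₃, π₃]; rw [pullback.lift_snd_assoc, pullback.lift_snd]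
  -- For any 𝔸-morphism ρ : X ⟶ R, V(ρ ≫ q) = p(V(ρπ₁), V(ρπ₂), V(ρπ₃)).
  have hcomp : ∀ ρ : X ⟶ R, V.map (ρ ≫ q) =
      p.papp (V.map (ρ ≫ π₁)) (V.map (ρ ≫ π₂)) (V.map (ρ ≫ π₃)) := by
    intro ρ
    rw [V.map_comp, hq, p.comp_papp_s5, ← V.map_comp, ← V.map_comp, ← V.map_comp]
  -- Values of q along the rows.
  have hq₁ : V.map (ρ₁ ≫ q) = p.papp (V.map x₁) (V.map y₂) (V.map z₂) := by
    rw [hcomp, hρ₁₁, hρ₁₂, hρ₁₃]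
  have hq₂ : V.map (ρ₂ ≫ q) = V.map z₂ := by
    rw [hcomp, hρ₂₁, hρ₂₂, hρ₂₃, p.papp_right]
  have hq₃ : V.map (ρ₃ ≫ q) = V.map z₃ := by
    rw [hcomp, hρ₃₁, hρ₃₂, hρ₃₃, p.papp_left]
  -- The interchange computation.
  calc p.papp (p.papp (V.map x₁) (V.map y₂) (V.map z₂)) (V.map z₂) (V.map z₃)
      = p.papp (V.map (ρ₁ ≫ q)) (V.map (ρ₂ ≫ q)) (V.map (ρ₃ ≫ q)) := by
        rw [hq₁, hq₂, hq₃]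
    _ = p.papp (V.map ρ₁) (V.map ρ₂) (V.map ρ₃) ≫ V.map q := by
        rw [p.papp_map_s5]; simp only [← V.map_comp]
    _ = p.papp (p.papp (V.map ρ₁) (V.map ρ₂) (V.map ρ₃) ≫ V.map π₁)
          (p.papp (V.map ρ₁) (V.map ρ₂) (V.map ρ₃) ≫ V.map π₂)
          (p.papp (V.map ρ₁) (V.map ρ₂) (V.map ρ₃) ≫ V.map π₃) := by
        rw [hq, p.comp_papp_s5]
    _ = p.papp (V.map x₁) (V.map y₂) (V.map z₃) := by
        rw [p.papp_map_s5, p.papp_map_s5, p.papp_map_s5]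
        simp only [← V.map_comp, hρ₁₁, hρ₂₁, hρ₃₁, hρ₁₂, hρ₂₂, hρ₃₂, hρ₁₃, hρ₂₃, hρ₃₃]
        rw [p.papp_right, p.papp_right, p.papp_left]
end

section
/- Let 𝔸 and 𝔹 be categories with finite limits, V : 𝔸 → 𝔹 a faithful functor preserving finite limits, and p : V×V×V → V a V-Mal'tsev operation. Let (A, s, t) and (A', s', t') be objects of 𝔸 with endomorphisms satisfying s∘t = t, t∘s = s, s'∘t' = t', t'∘s' = s'. Let τ : A' → A be a morphism with s∘τ∘s' = s∘τ and t∘τ∘t' = t∘τ, and let ψ : A' → A be a morphism satisfying V(ψ) = p_A⟨V(τ), V(τ∘s'), V(t∘τ∘s')⟩ (the codomain of the 2-cell τ). Then t∘ψ = t∘τ, ψ∘t' = t∘ψ, and s∘ψ = ψ∘s'; in particular ψ is a morphism (A',s',t') → (A,s,t) commuting with the endomorphism pairs. -/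
open CategoryTheory CategoryTheory.Limits

/-- The codomain `ψ` of a 2-cell `τ`, defined by `V(ψ) = p⟨V(τ), V(τ∘s'), V(t∘τ∘s')⟩`,
satisfies `t∘ψ = t∘τ`, `ψ∘t' = t∘ψ` and `s∘ψ = ψ∘s'`; in particular it is a morphism
`(A',s',t') → (A,s,t)`. -/
theorem cod_of_twoCell_is_morphism
    {𝔸 𝔹 : Type*} [Category 𝔸] [Category 𝔹]
    [HasFiniteLimits 𝔸] [HasFiniteLimits 𝔹]
    (V : 𝔸 ⥤ 𝔹) [V.Faithful] [PreservesFiniteLimits V]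
    (p : VMaltsevOperation V)
    {A A' : 𝔸} (s t : A ⟶ A) (s' t' : A' ⟶ A')
    (hst : t ≫ s = t) (hts : s ≫ t = s)
    (hst' : t' ≫ s' = t') (hts' : s' ≫ t' = s')
    (τ : A' ⟶ A)
    (hτs : s' ≫ τ ≫ s = τ ≫ s) (hτt : t' ≫ τ ≫ t = τ ≫ t)
    (ψ : A' ⟶ A)
    (hψ : V.map ψ = p.papp (V.map τ) (V.map (s' ≫ τ)) (V.map (s' ≫ τ ≫ t))) :
    ψ ≫ t = τ ≫ t ∧ t' ≫ ψ = ψ ≫ t ∧ ψ ≫ s = s' ≫ ψ := by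
  have papp_comp : ∀ {T : 𝔹} {B B' : 𝔸} (x y z : T ⟶ V.obj B) (f : B ⟶ B'),
      p.papp x y z ≫ V.map f
        = p.papp (x ≫ V.map f) (y ≫ V.map f) (z ≫ V.map f) := by
    intro T B B' x y z f
    unfold VMaltsevOperation.papp
    rw [Category.assoc, ← p.naturality f, ← Category.assoc]
    congr 1
    simp
  have comp_papp : ∀ {T T' : 𝔹} {B : 𝔸} (g : T' ⟶ T) (x y z : T ⟶ V.obj B),
      g ≫ p.papp x y z = p.papp (g ≫ x) (g ≫ y) (g ≫ z) := by
    intro T T' B g x y z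
    unfold VMaltsevOperation.papp
    rw [← Category.assoc, prod.comp_lift, prod.comp_lift]
  have pml : ∀ {T : 𝔹} {B : 𝔸} (x y : T ⟶ V.obj B), p.papp x y y = x :=
    fun x y => p.maltsev_left x y
  have pmr : ∀ {T : 𝔹} {B : 𝔸} (x y : T ⟶ V.obj B), p.papp y y x = x :=
    fun x y => p.maltsev_right x y
  have htt : t ≫ t = t := by
    calc t ≫ t = (t ≫ s) ≫ t := by rw [hst]
    _ = t ≫ (s ≫ t) := Category.assoc _ _ _
    _ = t ≫ s := by rw [hts]
    _ = t := hst
  have hss' : s' ≫ s' = s' := by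
    calc s' ≫ s' = (s' ≫ t') ≫ s' := by rw [hts']
    _ = s' ≫ (t' ≫ s') := Category.assoc _ _ _
    _ = s' ≫ t' := by rw [hst']
    _ = s' := hts'
  have h1 : ψ ≫ t = τ ≫ t := by
    apply V.map_injective
    have : V.map (ψ ≫ t) = V.map ψ ≫ V.map t := V.map_comp _ _
    rw [this, hψ, papp_comp]
    rw [show V.map (s' ≫ τ) ≫ V.map t = V.map (s' ≫ τ ≫ t) by
      rw [← V.map_comp, Category.assoc]]
    rw [show V.map (s' ≫ τ ≫ t) ≫ V.map t = V.map (s' ≫ τ ≫ t) by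
      rw [← V.map_comp]; congr 1; simp only [Category.assoc, htt]]
    rw [show V.map τ ≫ V.map t = V.map (τ ≫ t) from (V.map_comp _ _).symm]
    exact pml _ _
  refine ⟨h1, ?_, ?_⟩
  · apply V.map_injective
    have hL : V.map (t' ≫ ψ) = V.map (τ ≫ t) := by
      have : V.map (t' ≫ ψ) = V.map t' ≫ V.map ψ := V.map_comp _ _
      rw [this, hψ, comp_papp]
      rw [show V.map t' ≫ V.map τ = V.map (t' ≫ τ) from (V.map_comp _ _).symm]
      rw [show V.map t' ≫ V.map (s' ≫ τ) = V.map (t' ≫ τ) by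
        rw [← V.map_comp]; congr 1; rw [← Category.assoc, hst']]
      rw [show V.map t' ≫ V.map (s' ≫ τ ≫ t) = V.map (τ ≫ t) by
        rw [← V.map_comp]; congr 1; rw [← Category.assoc, hst', hτt]]
      exact pmr _ _
    rw [hL, h1]
  · apply V.map_injective
    have hL : V.map (ψ ≫ s) = V.map (s' ≫ τ ≫ t) := by
      have : V.map (ψ ≫ s) = V.map ψ ≫ V.map s := V.map_comp _ _
      rw [this, hψ, papp_comp]
      rw [show V.map τ ≫ V.map s = V.map (τ ≫ s) from (V.map_comp _ _).symm]
      rw [show V.map (s' ≫ τ) ≫ V.map s = V.map (τ ≫ s) by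
        rw [← V.map_comp]; congr 1; rw [Category.assoc, hτs]]
      rw [show V.map (s' ≫ τ ≫ t) ≫ V.map s = V.map (s' ≫ τ ≫ t) by
        rw [← V.map_comp]; congr 1; simp only [Category.assoc, hst]]
      exact pmr _ _
    have hR : V.map (s' ≫ ψ) = V.map (s' ≫ τ ≫ t) := by
      have : V.map (s' ≫ ψ) = V.map s' ≫ V.map ψ := V.map_comp _ _
      rw [this, hψ, comp_papp]
      rw [show V.map s' ≫ V.map (s' ≫ τ) = V.map (s' ≫ τ) by
        rw [← V.map_comp]; congr 1; rw [← Category.assoc, hss']]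
      rw [show V.map s' ≫ V.map (s' ≫ τ ≫ t) = V.map (s' ≫ τ ≫ t) by
        rw [← V.map_comp]; congr 1; rw [← Category.assoc, hss']]
      rw [show V.map s' ≫ V.map τ = V.map (s' ≫ τ) from (V.map_comp _ _).symm]
      exact pmr _ _
    rw [hL, hR]
end

section
/- Let X be a group and s, t : X → X group endomorphisms with s∘t = t and t∘s = s. Then the map σ : X → X defined by σ(x) = s(x) · x⁻¹ · t(x) is a group homomorphism if and only if every element of ker(s) commutes with every element of ker(t) (i.e. the commutator subgroup ⁅ker s, ker t⁆ is trivial). -/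
/-- For group endomorphisms `s, t : X → X` with `s∘t = t` and `t∘s = s`, the map
`σ(x) = s(x) * x⁻¹ * t(x)` (the Mal'tsev term `p⟨s, 1, t⟩`) is a group homomorphism
if and only if every element of `ker s` commutes with every element of `ker t`. -/
theorem maltsev_term_hom_iff_ker_commute
    {X : Type*} [Group X] (s t : X →* X)
    (hst : ∀ x : X, s (t x) = t x) (hts : ∀ x : X, t (s x) = s x) :
    (∀ x y : X, s (x * y) * (x * y)⁻¹ * t (x * y) =
        (s x * x⁻¹ * t x) * (s y * y⁻¹ * t y)) ↔
      ∀ a b : X, a ∈ s.ker → b ∈ t.ker → a * b = b * a := by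
  constructor
  · intro h a b ha hb
    rw [MonoidHom.mem_ker] at ha hb
    have H := h b a
    simp only [map_mul, ha, hb, one_mul, mul_one] at H
    rw [mul_inv_rev, mul_assoc, mul_assoc, mul_assoc] at H
    have H2 := mul_left_cancel H
    rw [← mul_assoc, ← mul_assoc] at H2
    have H3 := mul_right_cancel H2
    have : (a * b)⁻¹ = (b * a)⁻¹ := by rw [mul_inv_rev, mul_inv_rev, H3]
    exact inv_injective this
  · intro h x y
    have hss : ∀ z : X, s (s z) = s z := fun z => by rw [← hts z, hst, hts]
    have htt : ∀ z : X, t (t z) = t z := fun z => by rw [← hst z, hts, hst]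
    have ha : (x⁻¹ * t x) ∈ t.ker := by
      rw [MonoidHom.mem_ker, map_mul, map_inv, htt, inv_mul_cancel]
    have hb : (s y * y⁻¹) ∈ s.ker := by
      rw [MonoidHom.mem_ker, map_mul, map_inv, hss, mul_inv_cancel]
    have key := h _ _ hb ha
    calc s (x * y) * (x * y)⁻¹ * t (x * y)
        = s x * ((s y * y⁻¹) * (x⁻¹ * t x)) * t y := by
          simp only [map_mul, mul_inv_rev]; group
      _ = s x * ((x⁻¹ * t x) * (s y * y⁻¹)) * t y := by rw [key]
      _ = (s x * x⁻¹ * t x) * (s y * y⁻¹ * t y) := by group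
end

section
/- Let X be a group and s, t : X → X group endomorphisms such that every element of ker(s) commutes with every element of ker(t). Then for every group W and all group homomorphisms α, β, γ : W → X satisfying s∘α = s∘β and t∘β = t∘γ, the map W → X defined by w ↦ α(w) · β(w)⁻¹ · γ(w) is a group homomorphism. (This is property (P1) for the triple (X, s, t) in the category of groups.) -/
/-- Property (P1) for `(X, s, t)` in the category of groups: if `ker s` and `ker t`
commute elementwise, then for any homomorphisms `α, β, γ : W → X` with `s∘α = s∘β`
and `t∘β = t∘γ`, the pointwise Mal'tsev term `w ↦ α(w) * β(w)⁻¹ * γ(w)` is a group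
homomorphism. -/
theorem P1_for_groups
    {X : Type*} [Group X] (s t : X →* X)
    (hcomm : ∀ a b : X, a ∈ s.ker → b ∈ t.ker → a * b = b * a)
    {W : Type*} [Group W] (α β γ : W →* X)
    (hαβ : ∀ w : W, s (α w) = s (β w)) (hβγ : ∀ w : W, t (β w) = t (γ w)) :
    ∀ w w' : W, α (w * w') * (β (w * w'))⁻¹ * γ (w * w') =
      (α w * (β w)⁻¹ * γ w) * (α w' * (β w')⁻¹ * γ w') := by
  intro w w'
  have ha : α w' * (β w')⁻¹ ∈ s.ker := by
    simp [MonoidHom.mem_ker, hαβ]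
  have hb : (β w)⁻¹ * γ w ∈ t.ker := by
    simp [MonoidHom.mem_ker, ← hβγ]
  have key := hcomm _ _ ha hb
  have key2 := congrArg (· * γ w') key
  simp only [mul_assoc] at key2
  rw [map_mul, map_mul, map_mul, mul_inv_rev]
  simp only [mul_assoc]
  rw [key2]
end

section
/- Let X and B be groups, φ : B → Aut(X) an action of B on X by automorphisms, and h : X → B a group homomorphism satisfying h(φ_b(x)) = b · h(x) · b⁻¹ for all b ∈ B, x ∈ X. Let ξ₁ : X ⋊_φ B → Aut(X) be the action given by ξ₁(x', b) = φ_{h(x')·b}. Then the map m : X ⋊_{ξ₁} (X ⋊_φ B) → X ⋊_φ B defined by m(x, (x', b)) = (x · x', b) is a group homomorphism if and only if the Peiffer identity holds: x · y · x⁻¹ = φ_{h(x)}(y) for all x, y ∈ X. (This is the case s = t = ρ = λ = 1 of the description of internal bicategories in groups, recovering the notion of crossed module.) -/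
/-- With `ξ₁(x', b) = φ(h(x') * b)`, the multiplication map
`m : X ⋊[ξ₁] (X ⋊[φ] B) → X ⋊[φ] B`, `m(x, (x', b)) = (x * x', b)`, is a group
homomorphism if and only if the Peiffer identity `x * y * x⁻¹ = φ(h(x))(y)` holds;
this is the case `s = t = ρ = λ = 1` of internal bicategories in groups, recovering
crossed modules. -/
theorem m_hom_iff_peiffer
    {X B : Type*} [Group X] [Group B]
    (φ : B →* MulAut X) (h : X →* B)
    (heq : ∀ (b : B) (x : X), h (φ b x) = b * h x * b⁻¹)
    (ξ₁ : X ⋊[φ] B →* MulAut X)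
    (hξ₁ : ∀ g : X ⋊[φ] B, ξ₁ g = φ (h g.left * g.right)) :
    (∀ a b : X ⋊[ξ₁] (X ⋊[φ] B),
        (⟨(a * b).left * (a * b).right.left, (a * b).right.right⟩ : X ⋊[φ] B) =
          (⟨a.left * a.right.left, a.right.right⟩ : X ⋊[φ] B) *
            (⟨b.left * b.right.left, b.right.right⟩ : X ⋊[φ] B)) ↔
      ∀ x y : X, x * y * x⁻¹ = φ (h x) y := by
  constructor
  · intro H x y
    have := H ⟨1, ⟨x, 1⟩⟩ ⟨y, ⟨1, 1⟩⟩
    simp [SemidirectProduct.ext_iff, SemidirectProduct.mul_left,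
      SemidirectProduct.mul_right, hξ₁, mul_assoc] at this
    rw [← this]
    group
  · intro H a b
    obtain ⟨x₁, x₁', b₁⟩ := a
    obtain ⟨x₂, x₂', b₂⟩ := b
    simp only [SemidirectProduct.ext_iff, SemidirectProduct.mul_left,
      SemidirectProduct.mul_right, hξ₁, map_mul, MulAut.mul_apply]
    constructor
    · have key : φ (h x₁') (φ b₁ x₂) = x₁' * φ b₁ x₂ * x₁'⁻¹ := (H x₁' (φ b₁ x₂)).symm
      simp only [key]
      group
    · trivial
end

section
/- Let B be a topological abelian group and z : [0,1] → B a continuous map with z(0) = 0. Define ρ₀(z) : [0,1] × [0,1] → B by ρ₀(z)(s,t) = z(t) if 2t ≤ s, and ρ₀(z)(s,t) = z(t) − z((2t−s)/(2−s)) if 2t > s. Then ρ₀(z) is continuous, and satisfies the boundary conditions ρ₀(z)(0,t) = 0, ρ₀(z)(s,0) = 0 and ρ₀(z)(s,1) = 0 for all s, t ∈ [0,1]. Moreover ρ₀ is additive: ρ₀(z + z') = ρ₀(z) + ρ₀(z') (pointwise) for continuous z, z' : [0,1] → B with z(0) = z'(0) = 0. -/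
open unitInterval

/-- Clamp a real number into the unit interval `[0,1]`. -/
noncomputable def toI (x : ℝ) : I := Set.projIcc 0 1 zero_le_one x

/-- The homotopy `ρ₀(z) : [0,1] × [0,1] → B`, defined by `ρ₀(z)(s,t) = z(t)` if
`2t ≤ s` and `z(t) − z((2t−s)/(2−s))` if `2t > s`. -/
noncomputable def rho0 {B : Type*} [AddCommGroup B] (z : I → B) : I × I → B :=
  fun q =>
    if 2 * (q.2 : ℝ) ≤ (q.1 : ℝ) then z q.2
    else z q.2 - z (toI ((2 * (q.2 : ℝ) - (q.1 : ℝ)) / (2 - (q.1 : ℝ))))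

/-- The homotopy `λ₀(z) : [0,1] × [0,1] → B`, defined by
`λ₀(z)(s,t) = z(st/(2−s)) − z(2t/(2−s))` if `2t ≤ s` and
`z(st/(2−s)) − z(s/(2−s))` if `2t > s`. -/
noncomputable def lambda0 {B : Type*} [AddCommGroup B] (z : I → B) : I × I → B :=
  fun q =>
    if 2 * (q.2 : ℝ) ≤ (q.1 : ℝ) then
      z (toI (((q.1 : ℝ) * (q.2 : ℝ)) / (2 - (q.1 : ℝ)))) -
        z (toI ((2 * (q.2 : ℝ)) / (2 - (q.1 : ℝ))))
    else
      z (toI (((q.1 : ℝ) * (q.2 : ℝ)) / (2 - (q.1 : ℝ)))) -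
        z (toI ((q.1 : ℝ) / (2 - (q.1 : ℝ))))

/-- `∂₁ρ₀(z)(t) = ρ₀(z)(1,t)`. -/
noncomputable def d1rho0 {B : Type*} [AddCommGroup B] (z : I → B) : I → B :=
  fun t => rho0 z (1, t)

/-- `∂₁λ₀(z)(t) = λ₀(z)(1,t)`. -/
noncomputable def d1lambda0 {B : Type*} [AddCommGroup B] (z : I → B) : I → B :=
  fun t => lambda0 z (1, t)

/-- `ρ₀(z)` is continuous, vanishes on the prescribed boundary, and `ρ₀` is additive. -/
theorem rho0_continuous_boundary_additive
    {B : Type*} [AddCommGroup B] [TopologicalSpace B] [IsTopologicalAddGroup B]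
    (z : I → B) (hz : Continuous z) (hz0 : z 0 = 0) :
    Continuous (rho0 z) ∧
    (∀ t : I, rho0 z (0, t) = 0) ∧
    (∀ s : I, rho0 z (s, 0) = 0) ∧
    (∀ s : I, rho0 z (s, 1) = 0) ∧
    (∀ z' : I → B, Continuous z' → z' 0 = 0 →
      ∀ q : I × I, rho0 (fun u => z u + z' u) q = rho0 z q + rho0 z' q) := by
  constructor
  · have hden : ∀ q : I × I, (2 : ℝ) - (q.1 : ℝ) ≠ 0 := by
      intro q
      have := q.1.2.2
      nlinarith
    have hg : Continuous fun q : I × I =>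
        z q.2 - z (toI ((2 * (q.2 : ℝ) - (q.1 : ℝ)) / (2 - (q.1 : ℝ)))) := by
      apply (hz.comp continuous_snd).sub
      apply hz.comp
      apply (continuous_projIcc).comp
      exact ((continuous_const.mul (continuous_subtype_val.comp continuous_snd)).sub
        (continuous_subtype_val.comp continuous_fst)).div
        (continuous_const.sub (continuous_subtype_val.comp continuous_fst)) hden
    apply Continuous.if_le (hz.comp continuous_snd) hg
      (continuous_const.mul (continuous_subtype_val.comp continuous_snd))
      (continuous_subtype_val.comp continuous_fst)
    intro q hq
    simp only [Function.comp_apply] at hq ⊢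
    have h1 : (2 * (q.2 : ℝ) - (q.1 : ℝ)) / (2 - (q.1 : ℝ)) = 0 := by
      rw [show 2 * (q.2 : ℝ) = q.1 from hq]; simp
    have h0 : toI (0 : ℝ) = 0 := by
      simp [toI, Set.projIcc]
    rw [h1, h0, hz0, sub_zero]
  refine ⟨?_, ?_, ?_, ?_⟩
  · intro t
    simp only [rho0]
    split_ifs with h
    · have ht : t = 0 := by
        have := t.2.1
        have : (t : ℝ) = 0 := by push_cast at h; linarith
        exact Subtype.ext this
      rw [ht, hz0]
    · have : (2 * (t : ℝ) - ((0 : I) : ℝ)) / (2 - ((0 : I) : ℝ)) = (t : ℝ) := by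
        push_cast; ring
      rw [this]
      have : toI (t : ℝ) = t := Set.projIcc_val zero_le_one t
      rw [this, sub_self]
  · intro s
    simp only [rho0]
    rw [if_pos (by push_cast; simpa using s.2.1)]
    exact hz0
  · intro s
    simp only [rho0]
    by_cases h : 2 * (((1 : I)) : ℝ) ≤ (s : ℝ)
    · exfalso; have := s.2.2; push_cast at h; linarith
    · rw [if_neg h]
      have hden : (2 : ℝ) - (s : ℝ) ≠ 0 := by have := s.2.2; nlinarith
      have : (2 * (((1 : I)) : ℝ) - (s : ℝ)) / (2 - (s : ℝ)) = 1 := by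
        push_cast; field_simp
      rw [this]
      have : toI (1 : ℝ) = 1 := Set.projIcc_right zero_le_one
      rw [this, sub_self]
  · intro z' _ _ q
    simp only [rho0]
    split_ifs <;> abel
end
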